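/- Suppose invertible matrices in M_n(ℂ) are partitioned into g ≥ 2 groups of sizes n₁, …, n_g such that matrices in different groups are pairwise mutually orthogonal. If the groups other than group 1 together contain at least n² matrices (n₂ + ⋯ + n_g ≥ n²), then n₂ + ⋯ + n_g = n² and n₁ = 1. -/

import Mathlib

set_option maxHeartbeats 1000000

open Matrix Module

private abbrev MA (n : ℕ) := Matrix (Fin n) (Fin n) ℂ

private noncomputable def mulI (n : ℕ) : selfAdjoint (MA n) ≃ₗ[ℝ] skewAdjoint (MA n) where
  toFun x := ⟨Complex.I • (x : MA n), by
    have hx := x.2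
    rw [selfAdjoint.mem_iff] at hx
    rw [skewAdjoint.mem_iff, star_smul, hx]
    simp⟩
  invFun y := ⟨(-Complex.I) • (y : MA n), by
    have hy := y.2
    rw [skewAdjoint.mem_iff] at hy
    rw [selfAdjoint.mem_iff, star_smul, hy]
    simp⟩
  map_add' x y := by ext : 1; simp only [AddSubgroup.coe_add, smul_add]
  map_smul' r x := by ext : 1; simp only [SetLike.val_smul, RingHom.id_apply]; exact smul_comm _ _ _
  left_inv x := by ext : 1; simp [smul_smul]
  right_inv y := by ext : 1; simp [smul_smul]

private lemma finrank_MA (n : ℕ) : finrank ℝ (MA n) = n ^ 2 * 2 := by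
  rw [Module.finrank_matrix, Complex.finrank_real_complex]
  simp [sq]

private lemma finrank_skew (n : ℕ) : finrank ℝ (skewAdjoint (MA n)) = n ^ 2 := by
  have h1 : finrank ℝ (MA n) = finrank ℝ (selfAdjoint (MA n) × skewAdjoint (MA n)) :=
    (StarModule.decomposeProdAdjoint ℝ (MA n)).finrank_eq
  have h2 : finrank ℝ (selfAdjoint (MA n)) = finrank ℝ (skewAdjoint (MA n)) :=
    (mulI n).finrank_eq
  have hsk : FiniteDimensional ℝ (skewAdjoint (MA n)) :=
    FiniteDimensional.of_injective ((skewAdjoint.submodule ℝ (MA n)).subtype) Subtype.val_injective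
  have hsa : FiniteDimensional ℝ (selfAdjoint (MA n)) :=
    FiniteDimensional.of_injective ((selfAdjoint.submodule ℝ (MA n)).subtype) Subtype.val_injective
  rw [finrank_MA, Module.finrank_prod, h2] at h1
  omega

private lemma finrank_skew' (n : ℕ) : finrank ℝ (skewAdjoint.submodule ℝ (MA n)) = n ^ 2 :=
  finrank_skew n

private lemma skew_aux {n : ℕ} (A B : MA n) [Invertible A] (h : A * Bᴴ + B * Aᴴ = 0) :
    (⅟A * B)ᴴ = -(⅟A * B) := by
  have hA : Invertible Aᴴ := A.invertibleConjTranspose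
  have h1 : A * Bᴴ = -(B * Aᴴ) := by linear_combination (norm := noncomm_ring) h
  have h2 : Bᴴ = -(⅟A * B * Aᴴ) := by
    calc Bᴴ = ⅟A * (A * Bᴴ) := by rw [← mul_assoc, invOf_mul_self, one_mul]
    _ = -(⅟A * B * Aᴴ) := by rw [h1]; noncomm_ring
  rw [conjTranspose_mul, conjTranspose_invOf, h2]
  calc -(⅟A * B * Aᴴ) * ⅟Aᴴ = -(⅟A * B * (Aᴴ * ⅟Aᴴ)) := by noncomm_ring
  _ = -(⅟A * B) := by rw [mul_invOf_self, mul_one]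

private lemma mc_aux {n : ℕ} (A A' B : MA n) [Invertible A] (hC : (⅟A * B)ᴴ = -(⅟A * B))
    (h : A' * Bᴴ + B * A'ᴴ = 0) :
    (⅟A * A') * (⅟A * B) = (⅟A * B) * (⅟A * A')ᴴ := by
  have hA : Invertible Aᴴ := A.invertibleConjTranspose
  set C := ⅟A * B with hCdef
  have hB : B = A * C := by rw [hCdef, ← mul_assoc, mul_invOf_self, one_mul]
  have hBH : Bᴴ = -(C * Aᴴ) := by rw [hB, conjTranspose_mul, hC]; noncomm_ring
  have key : A * C * A'ᴴ = A' * C * Aᴴ := by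
    have h2 : A' * (-(C * Aᴴ)) + (A * C) * A'ᴴ = 0 := by rw [← hBH, ← hB]; exact h
    linear_combination (norm := noncomm_ring) h2
  rw [conjTranspose_mul, conjTranspose_invOf]
  calc ⅟A * A' * C = ⅟A * (A' * C * (Aᴴ * ⅟Aᴴ)) := by rw [mul_invOf_self, mul_one]; noncomm_ring
  _ = ⅟A * (A' * C * Aᴴ) * ⅟Aᴴ := by noncomm_ring
  _ = ⅟A * (A * C * A'ᴴ) * ⅟Aᴴ := by rw [key]
  _ = C * (A'ᴴ * ⅟Aᴴ) := by
    rw [← mul_assoc, ← mul_assoc, ← mul_assoc, invOf_mul_self, one_mul, mul_assoc, mul_assoc]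

private lemma scalar_of {n : ℕ} (hn : 0 < n) (M : MA n)
    (h : ∀ C : MA n, Cᴴ = -C → M * C = C * Mᴴ) :
    ∃ r : ℝ, M = (r : ℂ) • 1 := by
  have hskewI : (Complex.I • (1 : MA n))ᴴ = -(Complex.I • (1 : MA n)) := by
    rw [conjTranspose_smul, conjTranspose_one, Complex.star_def, Complex.conj_I, neg_smul]
  have hM : M = Mᴴ := by
    have h1 := h _ hskewI
    rw [mul_smul_comm, smul_mul_assoc, mul_one, one_mul] at h1
    exact smul_right_injective _ Complex.I_ne_zero h1
  have hs : ∀ C : MA n, Cᴴ = -C → M * C = C * M := fun C hC => (h C hC).trans (by rw [← hM])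
  have hcomm : ∀ X : MA n, M * X = X * M := by
    intro X
    have h1 : M * (X - Xᴴ) = (X - Xᴴ) * M := hs _
      (by rw [conjTranspose_sub, conjTranspose_conjTranspose]; abel)
    have h2 : M * (Complex.I • (X + Xᴴ)) = (Complex.I • (X + Xᴴ)) * M := hs _ (by
      rw [conjTranspose_smul, conjTranspose_add, conjTranspose_conjTranspose, Complex.star_def,
        Complex.conj_I, neg_smul, add_comm])
    rw [mul_smul_comm, smul_mul_assoc] at h2
    have h2' : M * (X + Xᴴ) = (X + Xᴴ) * M := smul_right_injective _ Complex.I_ne_zero h2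
    have h3 : M * ((X - Xᴴ) + (X + Xᴴ)) = ((X - Xᴴ) + (X + Xᴴ)) * M := by
      rw [mul_add, add_mul, h1, h2']
    have h4 : (X - Xᴴ) + (X + Xᴴ) = (2 : ℂ) • X := by rw [two_smul]; abel
    rw [h4, mul_smul_comm, smul_mul_assoc] at h3
    exact smul_right_injective _ two_ne_zero h3
  obtain ⟨c, hc⟩ := mem_range_scalar_iff_commute_single'.2 (fun i j => (hcomm _).symm)
  have hcr : (starRingEnd ℂ) c = c := by
    have h0 := hM
    rw [← hc] at h0
    have h1 := congrFun (congrFun h0 ⟨0, hn⟩) ⟨0, hn⟩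
    simpa [Matrix.scalar_apply, Matrix.conjTranspose_apply] using h1.symm
  refine ⟨c.re, ?_⟩
  rw [← hc, Matrix.scalar_apply]
  have : c = (c.re : ℂ) := (Complex.conj_eq_iff_re.mp hcr).symm
  rw [← this, ← Matrix.smul_one_eq_diagonal]

/-- Suppose invertible matrices in `Mₙ(ℂ)` (all `ℝ`-linearly independent) are
partitioned into `g ≥ 2` groups of sizes `ns i ≥ 1`, matrices in different groups
being pairwise mutually orthogonal. If the groups other than the first contain at
least `n²` matrices altogether, then they contain exactly `n²` and the first group
has exactly one matrix. -/
theorem stmt_11 {n g : ℕ} (hn : 0 < n) (hg : 2 ≤ g) (ns : Fin g → ℕ)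
    (hns : ∀ i, 1 ≤ ns i)
    (A : (i : Fin g) → Fin (ns i) → Matrix (Fin n) (Fin n) ℂ)
    (hinv : ∀ i j, IsUnit (A i j))
    (hli : LinearIndependent ℝ (fun p : Σ i : Fin g, Fin (ns i) => A p.1 p.2))
    (horth : ∀ i i' (j : Fin (ns i)) (j' : Fin (ns i')), i ≠ i' →
      A i j * (A i' j')ᴴ + A i' j' * (A i j)ᴴ = 0)
    (hbig : n ^ 2 ≤ ∑ i ∈ Finset.univ.erase (⟨0, by omega⟩ : Fin g), ns i) :
    (∑ i ∈ Finset.univ.erase (⟨0, by omega⟩ : Fin g), ns i) = n ^ 2 ∧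
      ns ⟨0, by omega⟩ = 1 := by
  have hg0 : 0 < g := by omega
  set z : Fin g := ⟨0, by omega⟩ with hzdef
  have hnz : 0 < ns z := hns z
  set j0 : Fin (ns z) := ⟨0, hnz⟩ with hj0def
  have hA0 : Invertible (A z j0) := (hinv z j0).invertible
  set A0 := A z j0 with hA0def
  -- the skew-adjoint family
  have hskew : ∀ (i : Fin g), i ≠ z → ∀ (j : Fin (ns i)),
      (⅟A0 * A i j)ᴴ = -(⅟A0 * A i j) := fun i hi j =>
    skew_aux A0 (A i j) (horth z i j0 j (Ne.symm hi))
  set Cfam : (Σ i : {i : Fin g // i ≠ z}, Fin (ns i.1)) → MA n :=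
    fun p => ⅟A0 * A p.1.1 p.2 with hCfamdef
  -- linear independence of the B subfamily
  have hiinj : Function.Injective
      (fun p : Σ i : {i : Fin g // i ≠ z}, Fin (ns i.1) =>
        (⟨p.1.1, p.2⟩ : Σ i : Fin g, Fin (ns i))) := by
    rintro ⟨⟨i, hi⟩, j⟩ ⟨⟨i', hi'⟩, j'⟩ h
    simp only [Sigma.mk.inj_iff] at h
    obtain ⟨h1, h2⟩ := h
    subst h1
    simp only [heq_eq_eq] at h2
    subst h2
    rfl
  have hliB : LinearIndependent ℝ
      (fun p : Σ i : {i : Fin g // i ≠ z}, Fin (ns i.1) => A p.1.1 p.2) := hli.comp _ hiinj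
  have hmulinj : Function.Injective (fun X : MA n => ⅟A0 * X) := by
    intro X Y h
    have h2 := congrArg (fun W => A0 * W) h
    simpa only [← mul_assoc, mul_invOf_self, one_mul] using h2
  have hliC : LinearIndependent ℝ Cfam :=
    hliB.map' (LinearMap.mulLeft ℝ (⅟A0)) (LinearMap.ker_eq_bot.2 hmulinj)
  -- cardinality
  have hcard : Fintype.card (Σ i : {i : Fin g // i ≠ z}, Fin (ns i.1)) =
      ∑ i ∈ Finset.univ.erase z, ns i := by
    rw [Fintype.card_sigma]
    simp only [Fintype.card_fin]
    rw [Finset.sum_subtype (p := fun i => i ≠ z) (Finset.univ.erase z)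
      (by intro x; simp [Finset.mem_erase]) ns]
  -- the span is inside the skew-adjoint submodule
  have hsub : ∀ p, Cfam p ∈ skewAdjoint.submodule ℝ (MA n) := by
    intro p
    show Cfam p ∈ skewAdjoint (MA n)
    rw [skewAdjoint.mem_iff]
    exact hskew p.1.1 p.1.2 p.2
  have hspan_le : Submodule.span ℝ (Set.range Cfam) ≤ skewAdjoint.submodule ℝ (MA n) :=
    Submodule.span_le.2 (Set.range_subset_iff.2 hsub)
  have hrank : finrank ℝ (Submodule.span ℝ (Set.range Cfam)) =
      Fintype.card (Σ i : {i : Fin g // i ≠ z}, Fin (ns i.1)) := finrank_span_eq_card hliC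
  have hfin : FiniteDimensional ℝ (skewAdjoint.submodule ℝ (MA n)) := inferInstance
  have hle : (∑ i ∈ Finset.univ.erase z, ns i) ≤ n ^ 2 := by
    rw [← hcard, ← hrank, ← finrank_skew' n]
    exact Submodule.finrank_mono hspan_le
  have part1 : (∑ i ∈ Finset.univ.erase z, ns i) = n ^ 2 := le_antisymm hle hbig
  refine ⟨part1, ?_⟩
  -- part 2: by contradiction
  by_contra hne1
  have h2 : 2 ≤ ns z := by omega
  set j1 : Fin (ns z) := ⟨1, by omega⟩ with hj1def
  set A' := A z j1 with hA'def
  have hspan_eq : Submodule.span ℝ (Set.range Cfam) = skewAdjoint.submodule ℝ (MA n) := by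
    apply Submodule.eq_of_le_of_finrank_le hspan_le
    rw [hrank, hcard, part1, finrank_skew' n]
  set M := ⅟A0 * A' with hMdef
  have hMC : ∀ C : MA n, Cᴴ = -C → M * C = C * Mᴴ := by
    intro C hC
    have hker : skewAdjoint.submodule ℝ (MA n) ≤
        LinearMap.ker (LinearMap.mulLeft ℝ M - LinearMap.mulRight ℝ Mᴴ) := by
      rw [← hspan_eq]
      apply Submodule.span_le.2
      rintro _ ⟨p, rfl⟩
      rw [SetLike.mem_coe, LinearMap.mem_ker, LinearMap.sub_apply, LinearMap.mulLeft_apply,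
        LinearMap.mulRight_apply, sub_eq_zero]
      exact mc_aux A0 A' (A p.1.1 p.2) (hskew p.1.1 p.1.2 p.2)
        (horth z p.1.1 j1 p.2 (Ne.symm p.1.2))
    have hmem : C ∈ skewAdjoint.submodule ℝ (MA n) := by
      show C ∈ skewAdjoint (MA n)
      rw [skewAdjoint.mem_iff]
      exact hC
    have h3 := hker hmem
    rw [LinearMap.mem_ker, LinearMap.sub_apply, LinearMap.mulLeft_apply,
      LinearMap.mulRight_apply, sub_eq_zero] at h3
    exact h3
  obtain ⟨r, hr⟩ := scalar_of hn M hMC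
  have hA'eq : A' = (r : ℝ) • A0 := by
    have h4 : A0 * M = A' := by rw [hMdef, ← mul_assoc, mul_invOf_self, one_mul]
    rw [← h4, hr, mul_smul_comm, mul_one]
    ext i j
    simp [Matrix.smul_apply, Complex.real_smul]
  have hp0p1 : (⟨z, j0⟩ : Σ i : Fin g, Fin (ns i)) ≠ ⟨z, j1⟩ := by
    intro h
    simp only [Sigma.mk.inj_iff, heq_eq_eq, true_and] at h
    rw [hj0def, hj1def, Fin.mk.injEq] at h
    omega
  have hzero : ∑ p ∈ ({⟨z, j0⟩, ⟨z, j1⟩} : Finset (Σ i : Fin g, Fin (ns i))),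
      (if p = ⟨z, j0⟩ then r else -1) • A p.1 p.2 = 0 := by
    rw [Finset.sum_pair hp0p1]
    rw [if_pos rfl, if_neg (Ne.symm hp0p1)]
    show r • A0 + (-1 : ℝ) • A' = 0
    rw [hA'eq, neg_one_smul, add_neg_eq_zero]
  have hcontra := linearIndependent_iff'.1 hli {⟨z, j0⟩, ⟨z, j1⟩}
    (fun p => if p = ⟨z, j0⟩ then r else -1) hzero ⟨z, j1⟩ (by simp)
  simp only [Ne.symm hp0p1, if_false, if_neg] at hcontra
  norm_num at hcontra
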